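/- arXiv:1611.04740 — 6 statements merged into one kernel-verified Lean document; each statement's English description precedes it below -/
import Mathlib

section
/- Validity of axiom A3: in every model M and world w, M,w ⊨ O(A ↔ B) if and only if M,w ⊨ (A ◁ B) ∧ (B ◁ A). -/
/-- Supervenience: M,w ⊨ A ◁ B -/
def sup {W : Type*} (S : W → W → W → Prop) (w : W) (A B : W → Prop) : Prop :=
  ∀ u v, S w u v → (A u ↔ A v) → (B u ↔ B v)

/-- Agreement: M,w ⊨ O A -/
def ag {W : Type*} (S : W → W → W → Prop) (w : W) (A : W → Prop) : Prop :=
  ∀ u v, S w u v → (A u ↔ A v)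

theorem axiom_A3 {W : Type*} [Nonempty W] (S : W → W → W → Prop) (w : W)
    (A B : W → Prop) :
    ag S w (fun u => A u ↔ B u) ↔ (sup S w A B ∧ sup S w B A) := by
  constructor
  · intro h
    constructor <;> intro u v huv hab <;> have := h u v huv <;> simp only at this <;> tauto
  · rintro ⟨h1, h2⟩ u v huv
    have := h1 u v huv
    have := h2 u v huv
    by_cases hA : A u <;> by_cases hAv : A v <;> by_cases hB : B u <;> by_cases hBv : B v <;> simp_all
end

section
/- Invariance of the agreement language under O-bisimulation: let M = (W,S,V) and M' = (W',S',V') be models and R ⊆ W×W' be an O-bisimulation. Then for all (w,w') ∈ R and all formulas A of the language with propositional connectives and the unary modality O, M,w ⊨ A iff M',w' ⊨ A. -/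
structure Model where
  W : Type
  S : W → W → W → Prop
  V : ℕ → W → Prop

/-- Formulas of the agreement language: atoms, ¬, ∧, O. -/
inductive Fm where
  | atom : ℕ → Fm
  | neg : Fm → Fm
  | conj : Fm → Fm → Fm
  | agree : Fm → Fm

def sat (M : Model) : M.W → Fm → Prop
  | w, .atom n => M.V n w
  | w, .neg A => ¬ sat M w A
  | w, .conj A B => sat M w A ∧ sat M w B
  | w, .agree A => ∀ u v, M.S w u v → (sat M u A ↔ sat M v A)

/-- O-bisimulation between models M and M'. -/
def OBisim (M M' : Model) (R : M.W → M'.W → Prop) : Prop :=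
  (∃ w w', R w w') ∧
  ∀ w w', R w w' →
    ((∀ n, M.V n w ↔ M'.V n w') ∧
    (∀ u v x, M.S w u v → M.S w u x → ∃ u' v' x',
      M'.S w' u' v' ∧ M'.S w' u' x' ∧
      ∃ y' z₁' z₂',
        (y' = u' ∨ y' = v' ∨ y' = x') ∧ (z₁' = u' ∨ z₁' = v' ∨ z₁' = x') ∧
        (z₂' = u' ∨ z₂' = v' ∨ z₂' = x') ∧ R u y' ∧ R v z₁' ∧ R x z₂') ∧
    (∀ u' v' x', M'.S w' u' v' → M'.S w' u' x' → ∃ u v x,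
      M.S w u v ∧ M.S w u x ∧
      ∃ y z₁ z₂,
        (y = u ∨ y = v ∨ y = x) ∧ (z₁ = u ∨ z₁ = v ∨ z₁ = x) ∧
        (z₂ = u ∨ z₂ = v ∨ z₂ = x) ∧ R y u' ∧ R z₁ v' ∧ R z₂ x'))

theorem OBisim_invariance (M M' : Model) (R : M.W → M'.W → Prop)
    (h : OBisim M M' R) :
    ∀ w w', R w w' → ∀ A : Fm, sat M w A ↔ sat M' w' A := by
  obtain ⟨-, h⟩ := h
  intro w w' hR A
  induction A generalizing w w' with
  | atom n => exact (h w w' hR).1 n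
  | neg A ih =>
    show ¬ _ ↔ ¬ _
    exact not_congr (ih w w' hR)
  | conj A B ihA ihB =>
    show _ ∧ _ ↔ _ ∧ _
    exact and_congr (ihA w w' hR) (ihB w w' hR)
  | agree A ih =>
    show (∀ u v, M.S w u v → _) ↔ (∀ u v, M'.S w' u v → _)
    constructor
    · intro hs u' v' hS
      obtain ⟨u, v, x, hSuv, hSux, y, z₁, z₂, hy, hz₁, hz₂, Ry, Rz₁, Rz₂⟩ :=
        (h w w' hR).2.2 u' v' v' hS hS
      have huv := hs u v hSuv
      have hux := hs u x hSux
      have hy' : sat M y A ↔ sat M u A := by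
        rcases hy with rfl|rfl|rfl
        · exact Iff.rfl
        · exact huv.symm
        · exact hux.symm
      have hz' : sat M z₁ A ↔ sat M u A := by
        rcases hz₁ with rfl|rfl|rfl
        · exact Iff.rfl
        · exact huv.symm
        · exact hux.symm
      calc sat M' u' A ↔ sat M y A := (ih y u' Ry).symm
        _ ↔ sat M z₁ A := by rw [hy', hz']
        _ ↔ sat M' v' A := ih z₁ v' Rz₁
    · intro hs u v hS
      obtain ⟨u', v', x', hSuv, hSux, y, z₁, z₂, hy, hz₁, hz₂, Ry, Rz₁, Rz₂⟩ :=
        (h w w' hR).2.1 u v v hS hS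
      have huv := hs u' v' hSuv
      have hux := hs u' x' hSux
      have hy' : sat M' y A ↔ sat M' u' A := by
        rcases hy with rfl|rfl|rfl
        · exact Iff.rfl
        · exact huv.symm
        · exact hux.symm
      have hz' : sat M' z₁ A ↔ sat M' u' A := by
        rcases hz₁ with rfl|rfl|rfl
        · exact Iff.rfl
        · exact huv.symm
        · exact hux.symm
      calc sat M u A ↔ sat M' y A := ih u y Ry
        _ ↔ sat M' z₁ A := by rw [hy', hz']
        _ ↔ sat M v A := (ih v z₁ Rz₁).symm
end

section
/- The supervenience language is strictly more expressive than the agreement language: there exist two pointed models (M,s) and (M',s') (each with four worlds) such that (M,s) and (M',s') satisfy the same formulas of the language with O, yet M,s ⊨ p ◁ q and M',s' ⊭ p ◁ q. Concretely: M has worlds {s,t,u,v}, S_s = {(t,u),(t,v)}, all other S empty, V(p) = {s,t}, V(q) = {s,v}; M' has worlds {s',t',u',v'}, S'_{s'} = {(t',u'),(t',v')}, all other S' empty, V'(p) = {s',v'}, V'(q) = {s',t'}. Then the relation R = {(s,s'),(t,v'),(v,t'),(u,u')} is an O-bisimulation containing (s,s'), M,s ⊨ p ◁ q, and M',s' ⊭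 p ◁ q. -/
/-- Supervenience: M,w ⊨ A ◁ B for formulas A, B. -/
def supSat (M : Model) (w : M.W) (A B : Fm) : Prop :=
  ∀ u v, M.S w u v → (sat M u A ↔ sat M v A) → (sat M u B ↔ sat M v B)

/-- Model M: worlds s=0, t=1, u=2, v=3; S_s = {(t,u),(t,v)}; V(p)={s,t}, V(q)={s,v}. -/
abbrev M1 : Model where
  W := Fin 4
  S := fun w x y => w = 0 ∧ x = 1 ∧ (y = 2 ∨ y = 3)
  V := fun n x => (n = 0 ∧ (x = 0 ∨ x = 1)) ∨ (n = 1 ∧ (x = 0 ∨ x = 3))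

/-- Model M': worlds s'=0, t'=1, u'=2, v'=3; S'_{s'} = {(t',u'),(t',v')};
V'(p)={s',v'}, V'(q)={s',t'}. -/
abbrev M2 : Model where
  W := Fin 4
  S := fun w x y => w = 0 ∧ x = 1 ∧ (y = 2 ∨ y = 3)
  V := fun n x => (n = 0 ∧ (x = 0 ∨ x = 3)) ∨ (n = 1 ∧ (x = 0 ∨ x = 1))

/-- R = {(s,s'),(t,v'),(v,t'),(u,u')} -/
abbrev R13 : M1.W → M2.W → Prop :=
  fun x y => (x = 0 ∧ y = 0) ∨ (x = 1 ∧ y = 3) ∨ (x = 3 ∧ y = 1) ∨ (x = 2 ∧ y = 2)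

lemma key13 : ∀ A : Fm, (sat M1 0 A ↔ sat M2 0 A) ∧ (sat M1 1 A ↔ sat M2 3 A) ∧
    (sat M1 3 A ↔ sat M2 1 A) ∧ (sat M1 2 A ↔ sat M2 2 A) := by
  intro A
  induction A with
  | atom n =>
    refine ⟨?_, ?_, ?_, ?_⟩ <;> simp only [sat, M1, M2] <;>
      simp <;> omega
  | neg A ih =>
    obtain ⟨h0, h1, h3, h2⟩ := ih
    exact ⟨by simp [sat, h0], by simp [sat, h1], by simp [sat, h3], by simp [sat, h2]⟩
  | conj A B ihA ihB =>
    obtain ⟨a0, a1, a3, a2⟩ := ihA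
    obtain ⟨b0, b1, b3, b2⟩ := ihB
    exact ⟨by simp [sat, a0, b0], by simp [sat, a1, b1], by simp [sat, a3, b3],
      by simp [sat, a2, b2]⟩
  | agree A ih =>
    obtain ⟨h0, h1, h3, h2⟩ := ih
    refine ⟨?_, ?_, ?_, ?_⟩
    · simp only [sat]
      constructor
      · intro h u v hs
        obtain ⟨_, hu, hv⟩ := hs
        subst hu
        have e2 := h 1 2 (by decide)
        have e3 := h 1 3 (by decide)
        rcases hv with hv | hv <;> subst hv <;> tauto
      · intro h u v hs
        obtain ⟨_, hu, hv⟩ := hs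
        subst hu
        have e2 := h 1 2 (by decide)
        have e3 := h 1 3 (by decide)
        rcases hv with hv | hv <;> subst hv <;> tauto
    all_goals
      refine ⟨fun _ u v hs => ?_, fun _ u v hs => ?_⟩ <;>
        exact absurd hs.1 (by decide)

theorem sup_more_expressive :
    OBisim M1 M2 R13 ∧ R13 0 0 ∧
    (∀ A : Fm, sat M1 (0 : Fin 4) A ↔ sat M2 (0 : Fin 4) A) ∧
    supSat M1 (0 : Fin 4) (.atom 0) (.atom 1) ∧
    ¬ supSat M2 (0 : Fin 4) (.atom 0) (.atom 1) := by
  refine ⟨⟨⟨0, 0, Or.inl ⟨rfl, rfl⟩⟩, ?_⟩, Or.inl ⟨rfl, rfl⟩, fun A => (key13 A).1, ?_, ?_⟩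
  · intro w w' hR
    refine ⟨?_, ?_, ?_⟩
    · intro n
      rcases hR with ⟨h1, h2⟩ | ⟨h1, h2⟩ | ⟨h1, h2⟩ | ⟨h1, h2⟩ <;> subst h1 <;> subst h2 <;>
        simp [M1, M2] <;> omega
    · rcases hR with ⟨h1, h2⟩ | ⟨h1, h2⟩ | ⟨h1, h2⟩ | ⟨h1, h2⟩ <;> subst h1 <;> subst h2 <;>
        first
          | (intro u v x hs _; exact absurd hs.1 (by decide))
          | (intro u v x hs ht
             obtain ⟨_, hu, hv⟩ := hs
             obtain ⟨_, _, hx⟩ := ht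
             subst hu
             refine ⟨1, 3, 2, by decide, by decide,
               3, if v = 2 then 2 else 1, if x = 2 then 2 else 1, ?_⟩
             rcases hv with hv | hv <;> rcases hx with hx | hx <;> subst hv <;> subst hx <;>
               decide)
    · rcases hR with ⟨h1, h2⟩ | ⟨h1, h2⟩ | ⟨h1, h2⟩ | ⟨h1, h2⟩ <;> subst h1 <;> subst h2 <;>
        first
          | (intro u v x hs _; exact absurd hs.1 (by decide))
          | (intro u v x hs ht
             obtain ⟨_, hu, hv⟩ := hs
             obtain ⟨_, _, hx⟩ := ht
             subst hu
             refine ⟨1, 3, 2, by decide, by decide,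
               3, if v = 2 then 2 else 1, if x = 2 then 2 else 1, ?_⟩
             rcases hv with hv | hv <;> rcases hx with hx | hx <;> subst hv <;> subst hx <;>
               decide)
  · intro u v hs hag
    obtain ⟨_, hu, hv⟩ := hs
    subst hu
    rcases hv with hv | hv <;> subst hv <;> simp [sat, M1] at hag
  · intro h
    have := h 1 2 ⟨rfl, rfl, Or.inl rfl⟩ (by simp [sat, M2])
    simp [sat, M2] at this
end

section
/- Definability of the determinacy operator via non-contingency (case n = 1): for every Kripke model M = (W,R,V) and world w, M,w ⊨ D(A;B) if and only if M,w ⊨ (Δ(A → B) ∨ Δ(A → ¬B)) ∧ (Δ(¬A → B) ∨ Δ(¬A → ¬B)). -/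
/-- Non-contingency: M,w ⊨ Δ C. -/
def nonCont {W : Type*} (R : W → W → Prop) (w : W) (C : W → Prop) : Prop :=
  ∀ u v, R w u → R w v → (C u ↔ C v)

/-- Determinacy: M,w ⊨ D(A;B). -/
def det {W : Type*} (R : W → W → Prop) (w : W) (A B : W → Prop) : Prop :=
  ∀ u v, R w u → R w v → (A u ↔ A v) → (B u ↔ B v)

theorem det_def_nonCont {W : Type*} (R : W → W → Prop) (V : ℕ → W → Prop)
    (w : W) (A B : W → Prop) :
    det R w A B ↔
      ((nonCont R w (fun u => A u → B u) ∨ nonCont R w (fun u => A u → ¬ B u)) ∧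
       (nonCont R w (fun u => ¬ A u → B u) ∨ nonCont R w (fun u => ¬ A u → ¬ B u))) := by
  constructor
  · intro hd
    constructor
    · by_cases h : ∃ u₀, R w u₀ ∧ A u₀ ∧ B u₀
      · left
        obtain ⟨u₀, hr₀, hA₀, hB₀⟩ := h
        intro u v hu hv
        have h1 : A u → B u := fun hA =>
          (hd u₀ u hr₀ hu (iff_of_true hA₀ hA)).mp hB₀
        have h2 : A v → B v := fun hA =>
          (hd u₀ v hr₀ hv (iff_of_true hA₀ hA)).mp hB₀
        exact iff_of_true h1 h2
      · right
        intro u v hu hv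
        push_neg at h
        exact iff_of_true (fun hA hB => h u hu hA hB) (fun hA hB => h v hv hA hB)
    · by_cases h : ∃ u₀, R w u₀ ∧ ¬ A u₀ ∧ B u₀
      · left
        obtain ⟨u₀, hr₀, hA₀, hB₀⟩ := h
        intro u v hu hv
        have h1 : ¬ A u → B u := fun hA =>
          (hd u₀ u hr₀ hu (iff_of_false hA₀ hA)).mp hB₀
        have h2 : ¬ A v → B v := fun hA =>
          (hd u₀ v hr₀ hv (iff_of_false hA₀ hA)).mp hB₀
        exact iff_of_true h1 h2
      · right
        intro u v hu hv
        push_neg at h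
        exact iff_of_true (fun hA hB => h u hu hA hB) (fun hA hB => h v hv hA hB)
  · rintro ⟨h1, h2⟩ u v hu hv hAB
    by_cases hA : A u
    · have hAv : A v := hAB.mp hA
      rcases h1 with h | h
      · have := h u v hu hv
        simp only [hA, hAv, true_implies] at this
        exact this
      · have := h u v hu hv
        simp only [hA, hAv, true_implies] at this
        tauto
    · have hAv : ¬ A v := fun hx => hA (hAB.mpr hx)
      rcases h2 with h | h
      · have := h u v hu hv
        simp only [hA, hAv, not_false_iff, true_implies] at this
        exact this
      · have := h u v hu hv
        simp only [hA, hAv, not_false_iff, true_implies] at this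
        tauto
end

section
/- General definability of determinacy via non-contingency: for every n ∈ ℕ, formulas A₁,…,Aₙ,B, Kripke model M = (W,R,V) and world w: M,w ⊨ D(A₁,…,Aₙ;B) if and only if for every subset T ⊆ {1,…,n}, M,w ⊨ Δ(B_T → B) ∨ Δ(B_T → ¬B), where B_T is the conjunction C₁ ∧ … ∧ Cₙ with Cᵢ = Aᵢ if i ∈ T and Cᵢ = ¬Aᵢ otherwise. -/
/-- Determinacy: M,w ⊨ D(A₁,…,Aₙ;B). -/
def detN {W : Type*} (n : ℕ) (R : W → W → Prop) (w : W) (A : Fin n → W → Prop)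
    (B : W → Prop) : Prop :=
  ∀ u v, R w u → R w v → (∀ i, A i u ↔ A i v) → (B u ↔ B v)

/-- B_T : the conjunction whose i-th conjunct is Aᵢ if i ∈ T, ¬Aᵢ otherwise. -/
def BT {W : Type*} {n : ℕ} (A : Fin n → W → Prop) (T : Finset (Fin n)) (u : W) : Prop :=
  ∀ i, if i ∈ T then A i u else ¬ A i u

theorem detN_def_nonCont {W : Type*} (n : ℕ) (R : W → W → Prop) (V : ℕ → W → Prop)
    (w : W) (A : Fin n → W → Prop) (B : W → Prop) :
    detN n R w A B ↔
      ∀ T : Finset (Fin n),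
        nonCont R w (fun u => BT A T u → B u) ∨
        nonCont R w (fun u => BT A T u → ¬ B u) := by
  classical
  constructor
  · intro hD T
    -- key: successors satisfying BT A T agree on B
    have key : ∀ u v, R w u → R w v → BT A T u → BT A T v → (B u ↔ B v) := by
      intro u v hu hv hbu hbv
      refine hD u v hu hv ?_
      intro i
      have h1 := hbu i; have h2 := hbv i
      by_cases hi : i ∈ T <;> simp [hi] at h1 h2 <;> tauto
    by_cases h : ∃ u, R w u ∧ BT A T u ∧ B u
    · left
      rcases h with ⟨u0, hu0, hb0, hB0⟩
      intro u v hu hv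
      constructor <;> intro _ hb
      · exact ((key u0 v hu0 hv hb0 hb).mp hB0)
      · exact ((key u0 u hu0 hu hb0 hb).mp hB0)
    · right
      push_neg at h
      intro u v hu hv
      constructor <;> intro _ hb hB
      · exact h v hv hb hB
      · exact h u hu hb hB
  · intro h u v hu hv hA
    set T : Finset (Fin n) := Finset.univ.filter (fun i => A i u) with hT
    have hbu : BT A T u := by
      intro i
      by_cases hi : A i u <;> simp [hT, hi]
    have hbv : BT A T v := by
      intro i
      by_cases hi : A i u <;> simp [hT, hi, (hA i).symm] <;> tauto
    rcases h T with hc | hc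
    · have := hc u v hu hv
      tauto
    · have := hc u v hu hv
      tauto
end

section
/- Reduction of relativized supervenience to relativized agreement: in every model M and world w, M,w ⊨ A ◁^C B if and only if M,w ⊨ O(A ∧ C, B) ∧ O(¬A ∧ C, B). Here M,w ⊨ A ◁^C B iff for all u,v with S_w u v, M,u ⊨ C and M,v ⊨ C, if (M,u ⊨ A ↔ M,v ⊨ A) then (M,u ⊨ B ↔ M,v ⊨ B); and M,w ⊨ O(X,B) iff for all u,v with S_w u v, if M,u ⊨ X and M,v ⊨ X, then M,u ⊨ B ↔ M,v ⊨ B. -/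
/-- Relativized supervenience: M,w ⊨ A ◁^C B. -/
def supRel {W : Type*} (S : W → W → W → Prop) (w : W) (A C B : W → Prop) : Prop :=
  ∀ u v, S w u v → C u → C v → (A u ↔ A v) → (B u ↔ B v)

/-- Relativized agreement: M,w ⊨ O(X, B). -/
def agRel {W : Type*} (S : W → W → W → Prop) (w : W) (X B : W → Prop) : Prop :=
  ∀ u v, S w u v → X u → X v → (B u ↔ B v)

theorem supRel_iff_agRel {W : Type*} [Nonempty W] (S : W → W → W → Prop) (w : W)
    (A C B : W → Prop) :
    supRel S w A C B ↔
      (agRel S w (fun u => A u ∧ C u) B ∧ agRel S w (fun u => ¬ A u ∧ C u) B) := by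
  constructor
  · intro h
    exact ⟨fun u v hs hu hv => h u v hs hu.2 hv.2 (by tauto),
           fun u v hs hu hv => h u v hs hu.2 hv.2 (by tauto)⟩
  · rintro ⟨h1, h2⟩ u v hs hcu hcv hA
    by_cases hAu : A u
    · exact h1 u v hs ⟨hAu, hcu⟩ ⟨hA.mp hAu, hcv⟩
    · exact h2 u v hs ⟨hAu, hcu⟩ ⟨fun x => hAu (hA.mpr x), hcv⟩
end
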